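/- Let R be a commutative ring, I, J ideals of R and a, b ∈ I with a·I ⊆ J·I + (a·b). Then I = (b) + ((J·I : a) ∩ I), and consequently I = (b) + ((J : a) ∩ I). -/

import Mathlib

theorem stmt_3 {R : Type*} [CommRing R] (I J : Ideal R) (a b : R)
    (ha : a ∈ I) (hb : b ∈ I)
    (h : ∀ x ∈ I, a * x ∈ J * I ⊔ Ideal.span {a * b}) :
    I = Ideal.span {b} ⊔ ((J * I).colon (Ideal.span {a}) ⊓ I) ∧
      I = Ideal.span {b} ⊔ (J.colon (Ideal.span {a}) ⊓ I) := by
  have h1 : I = Ideal.span {b} ⊔ ((J * I).colon (Ideal.span {a}) ⊓ I) := by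
    apply le_antisymm
    · intro x hx
      obtain ⟨j, hj, s, hs, hax⟩ := Submodule.mem_sup.mp (h x hx)
      obtain ⟨r, rfl⟩ := Ideal.mem_span_singleton'.mp hs
      have hxb : x - r * b ∈ (J * I).colon (Ideal.span {a}) ⊓ I := by
        refine ⟨Ideal.mem_colon_span_singleton.mpr ?_, I.sub_mem hx (I.mul_mem_left r hb)⟩
        have heq : (x - r * b) * a = j := by linear_combination -hax
        rw [heq]; exact hj
      have : x = r * b + (x - r * b) := by ring
      rw [this]
      exact Submodule.add_mem_sup (Ideal.mem_span_singleton'.mpr ⟨r, rfl⟩) hxb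
    · exact sup_le ((Ideal.span_singleton_le_iff_mem I).mpr hb) inf_le_right
  refine ⟨h1, le_antisymm ?_ (sup_le ((Ideal.span_singleton_le_iff_mem I).mpr hb) inf_le_right)⟩
  conv_lhs => rw [h1]
  exact sup_le_sup_left (inf_le_inf_right I (Submodule.colon_mono (S₁ := (Ideal.span {a} : Set R)) (S₂ := (Ideal.span {a} : Set R)) (N₁ := J * I) (N₂ := J) Ideal.mul_le_left subset_rfl)) _
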